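/- Let x_n be the n-th point of the digital net P(C) and let k ∈ ℕ^s with C·k = h⃗ ∈ ℤ_p^m. Then wal_k(x_n) = ω_p^{n_0 h_0 + ⋯ + n_{m−1} h_{m−1}}, where n⃗ = (n_0,…,n_{m−1}) is the vector of base-p digits of n and the exponent is computed via representatives in {0,…,p−1} of the products in ℤ_p. -/

import Mathlib

open scoped BigOperators

/-- `ω_p = exp(2πi/p)`. -/
noncomputable def omega (p : ℕ) : ℂ := Complex.exp (2 * Real.pi * Complex.I / p)

/-- The `i`-th base-`p` digit of the natural number `n` (starting from `i = 0`). -/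
def ndigit (p n i : ℕ) : ℕ := (n / p ^ i) % p

/-- The `i`-th base-`p` digit of the real number `x` (starting from `i = 1`):
`x_i = ⌊p^i x⌋ mod p`. -/
noncomputable def xdigit (p : ℕ) (x : ℝ) (i : ℕ) : ℕ := (⌊(p : ℝ) ^ i * x⌋).toNat % p

/-- The base-`p` Walsh function `wal_k(x) = ω_p^{x_1 k_0 + x_2 k_1 + ⋯}`
(the digits of `k` vanish beyond index `k`, so the sum below is the full series). -/
noncomputable def wal (p k : ℕ) (x : ℝ) : ℂ :=
  omega p ^ (∑ i ∈ Finset.range (k + 1), xdigit p x (i + 1) * ndigit p k i)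

/-- Multivariate Walsh function `wal_k(x) = ∏_j wal_{k_j}(x_j)`. -/
noncomputable def walS (p s : ℕ) (k : Fin s → ℕ) (x : Fin s → ℝ) : ℂ :=
  ∏ j, wal p (k j) (x j)

/-- The vector of the first `m` base-`p` digits of `n`, viewed in `ℤ_p^m`. -/
def nvec (p m : ℕ) (n : ℕ) : Fin m → ZMod p := fun i => (ndigit p n i : ZMod p)

/-- The `n`-th point of the digital net generated by matrices `C = (C_1,…,C_s)`:
`x_{j,n} = Σ_{i=1}^m y_{j,n,i} p^{-i}` where `y⃗_{j,n} = C_j n⃗`. -/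
noncomputable def netPoint (p s m : ℕ) (C : Fin s → Matrix (Fin m) (Fin m) (ZMod p)) (n : ℕ) :
    Fin s → ℝ :=
  fun j => ∑ i : Fin m, ((Matrix.mulVec (C j) (nvec p m n)) i).val / (p : ℝ) ^ (i.val + 1)

/-- `C·k = C_1ᵀ k⃗_1^{(m)} + ⋯ + C_sᵀ k⃗_s^{(m)} ∈ ℤ_p^m`. -/
def Cdot (p s m : ℕ) (C : Fin s → Matrix (Fin m) (Fin m) (ZMod p)) (k : Fin s → ℕ) :
    Fin m → ZMod p :=
  ∑ j, Matrix.mulVec (Matrix.transpose (C j)) (nvec p m (k j))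

/-- Digitwise addition modulo `p` of base-`p` digits: `k ⊕ l`. -/
def dadd (p k l : ℕ) : ℕ :=
  ∑ i ∈ Finset.range (k + l + 1), ((ndigit p k i + ndigit p l i) % p) * p ^ i

/-- Digitwise subtraction modulo `p` of base-`p` digits: `k ⊖ l`. -/
def dsub (p k l : ℕ) : ℕ :=
  ∑ i ∈ Finset.range (k + l + 1), ((ndigit p k i + (p - ndigit p l i)) % p) * p ^ i
lemma omega_pow_p (p : ℕ) (hp : 0 < p) : omega p ^ p = 1 := by
  rw [omega, ← Complex.exp_nat_mul]
  have hpc : (p : ℂ) ≠ 0 := Nat.cast_ne_zero.mpr hp.ne'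
  rw [mul_div_assoc', mul_comm (p:ℂ), mul_div_assoc, div_self hpc, mul_one,
    Complex.exp_two_pi_mul_I]


lemma omega_pow_mod (p : ℕ) (hp : 0 < p) (a : ℕ) : omega p ^ a = omega p ^ (a % p) := by
  conv_lhs => rw [← Nat.mod_add_div a p]
  rw [pow_add, pow_mul, omega_pow_p p hp, one_pow, mul_one]


lemma sum_digits_lt (p : ℕ) (hp : 1 < p) (a : ℕ → ℕ) (ha : ∀ t, a t < p) (m : ℕ) :
    ∑ t ∈ Finset.range m, a t * p ^ t < p ^ m := by
  induction m with
  | zero => simp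
  | succ m ih =>
    rw [Finset.sum_range_succ, pow_succ]
    have h1 : a m * p ^ m ≤ (p - 1) * p ^ m :=
      Nat.mul_le_mul_right _ (Nat.le_sub_one_of_lt (ha m))
    have h2 : p ^ m + (p - 1) * p ^ m = p ^ m * p := by
      have e1 : 1 + (p - 1) = p := by omega
      calc p ^ m + (p - 1) * p ^ m = (1 + (p - 1)) * p ^ m := by ring
        _ = p * p ^ m := by rw [e1]
        _ = p ^ m * p := mul_comm _ _
    omega


lemma digit_of_sum (p : ℕ) (hp : 1 < p) (a : ℕ → ℕ) (ha : ∀ t, a t < p) (m i : ℕ)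
    (him : i < m) : ndigit p (∑ t ∈ Finset.range m, a t * p ^ t) i = a i := by
  have hsplit : ∑ t ∈ Finset.range m, a t * p ^ t
      = (∑ t ∈ Finset.range i, a t * p ^ t) + ∑ t ∈ Finset.Ico i m, a t * p ^ t := by
    rw [Finset.range_eq_Ico, ← Finset.sum_Ico_consecutive _ (Nat.zero_le i) him.le, ← Finset.range_eq_Ico]
  have hIco : ∑ t ∈ Finset.Ico i m, a t * p ^ t
      = p ^ i * ∑ u ∈ Finset.range (m - i), a (i + u) * p ^ u := by
    rw [Finset.sum_Ico_eq_sum_range, Finset.mul_sum]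
    refine Finset.sum_congr rfl fun u _ => ?_
    rw [pow_add]; ring
  have hL : ∑ t ∈ Finset.range i, a t * p ^ t < p ^ i := sum_digits_lt p hp a ha i
  have hpi : 0 < p ^ i := pow_pos (by omega) i
  rw [ndigit, hsplit, hIco, Nat.add_mul_div_left _ _ hpi, Nat.div_eq_of_lt hL, zero_add]
  obtain ⟨d, hd⟩ : ∃ d, m - i = d + 1 := ⟨m - i - 1, by omega⟩
  rw [hd, Finset.sum_range_succ']
  simp only [add_zero, pow_zero, mul_one]
  have : ∑ u ∈ Finset.range d, a (i + (u + 1)) * p ^ (u + 1)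
      = p * ∑ u ∈ Finset.range d, a (i + (u + 1)) * p ^ u := by
    rw [Finset.mul_sum]
    refine Finset.sum_congr rfl fun u _ => ?_
    rw [pow_succ]; ring
  rw [this, add_comm, Nat.add_mul_mod_self_left, Nat.mod_eq_of_lt (ha i)]


lemma xdigit_sum (p : ℕ) (hp : 1 < p) (m : ℕ) (Y : ℕ → ℕ) (hY : ∀ t, Y t < p) (i : ℕ) :
    xdigit p (∑ l ∈ Finset.range m, (Y l : ℝ) / (p : ℝ) ^ (l + 1)) (i + 1)
      = if i < m then Y i else 0 := by
  have hp0 : (0:ℝ) < (p:ℝ) := by exact_mod_cast Nat.lt_of_lt_of_le Nat.zero_lt_one hp.le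
  set A : ℕ := ∑ t ∈ Finset.range m, Y (m - 1 - t) * p ^ t with hA
  have hA_lt : A < p ^ m := sum_digits_lt p hp _ (fun t => hY _) m
  have hdig : ∀ t < m, ndigit p A t = Y (m - 1 - t) :=
    fun t ht => digit_of_sum p hp _ (fun t => hY _) m t ht
  have hx : (∑ l ∈ Finset.range m, (Y l : ℝ) / (p : ℝ) ^ (l + 1)) = (A : ℝ) / (p : ℝ) ^ m := by
    rw [← Finset.sum_range_reflect (fun l => (Y l : ℝ) / (p : ℝ) ^ (l + 1)) m]
    have hAc : (A : ℝ) = ∑ t ∈ Finset.range m, (Y (m - 1 - t) : ℝ) * (p:ℝ) ^ t := by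
      rw [hA]; push_cast; ring_nf
      exact Finset.sum_congr rfl fun _ _ => mul_comm _ _
    rw [hAc, Finset.sum_div]
    refine Finset.sum_congr rfl fun t ht => ?_
    have htm : t < m := Finset.mem_range.mp ht
    have he : (m - 1 - t) + 1 = m - t := by omega
    have hmt : t + (m - t) = m := by omega
    rw [he, div_eq_div_iff (by positivity) (by positivity), mul_assoc, ← pow_add, hmt]
  rw [hx, xdigit]
  by_cases him : i < m
  · have hmi : m = (i + 1) + (m - 1 - i) := by omega
    have he : (p:ℝ) ^ (i+1) * ((A:ℝ) / (p:ℝ) ^ m) = (A : ℝ) / ((p ^ (m - 1 - i) : ℕ) : ℝ) := by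
      push_cast
      rw [hmi, pow_add]
      have h1 : ((p:ℝ)) ^ (i+1) ≠ 0 := by positivity
      have h2 : ((p:ℝ)) ^ (m-1-i) ≠ 0 := by positivity
      field_simp
      ring_nf; rw [show 1 + i + (m - 1 - i) - 1 - i = m - 1 - i by omega]
    rw [he, if_pos him, Int.floor_toNat, Nat.floor_div_natCast, Nat.floor_natCast]
    have hd := hdig (m - 1 - i) (by omega)
    rw [ndigit] at hd
    rw [hd]
    congr 1
    omega
  · rw [if_neg him]
    have he : (p:ℝ) ^ (i+1) * ((A:ℝ) / (p:ℝ) ^ m) = ((A * p ^ (i + 1 - m) : ℕ) : ℝ) := by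
      push_cast
      have hmi : i + 1 = m + (i + 1 - m) := by omega
      rw [hmi, pow_add]
      have h2 : ((p:ℝ)) ^ m ≠ 0 := by positivity
      field_simp
      ring_nf; rw [show 1 + i - m + m - m = 1 + i - m by omega]
    rw [he, Int.floor_natCast, Int.toNat_natCast]
    have hd : p ∣ A * p ^ (i + 1 - m) := by
      have hne : i + 1 - m ≠ 0 := by omega
      exact Dvd.dvd.mul_left (dvd_pow_self p hne) A
    exact Nat.mod_eq_zero_of_dvd hd


lemma ndigit_eq_zero (p k i : ℕ) (hp : 1 < p) (hi : k + 1 ≤ i) : ndigit p k i = 0 := by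
  rw [ndigit, Nat.div_eq_of_lt, Nat.zero_mod]
  calc k < 2 ^ k := Nat.lt_two_pow_self
    _ ≤ p ^ k := Nat.pow_le_pow_left (by omega) k
    _ ≤ p ^ i := Nat.pow_le_pow_right (by omega) (by omega)


/-- `wal_k(x_n) = ω_p^{n⃗ ⋅ h⃗}` where `h⃗ = C·k`. -/
theorem statement2 (p s m : ℕ) [Fact p.Prime] (hs : 1 ≤ s) (hm : 1 ≤ m)
    (C : Fin s → Matrix (Fin m) (Fin m) (ZMod p)) (n : ℕ) (hn : n < p ^ m)
    (k : Fin s → ℕ) (h : Fin m → ZMod p) (hh : Cdot p s m C k = h) :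
    walS p s k (netPoint p s m C n) = omega p ^ (∑ i, nvec p m n i * h i).val := by
  have hp : 1 < p := (Fact.out : p.Prime).one_lt
  haveI : NeZero p := ⟨by omega⟩
  set y : Fin s → Fin m → ZMod p := fun j => (C j).mulVec (nvec p m n) with hy
  set Y : Fin s → ℕ → ℕ := fun j t => if ht : t < m then (y j ⟨t, ht⟩).val else 0 with hY
  have hYlt : ∀ j t, Y j t < p := by
    intro j t
    rw [hY]
    dsimp only
    split
    · exact ZMod.val_lt _
    · omega
  have hxj : ∀ j, netPoint p s m C n j = ∑ l ∈ Finset.range m, (Y j l : ℝ) / (p : ℝ) ^ (l + 1) := by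
    intro j
    rw [netPoint, ← Fin.sum_univ_eq_sum_range (fun l => (Y j l : ℝ) / (p : ℝ) ^ (l + 1)) m]
    refine Finset.sum_congr rfl fun i _ => ?_
    simp only [hY, i.isLt, dif_pos, Fin.eta, hy]
  have key : ∀ j, wal p (k j) (netPoint p s m C n j)
      = omega p ^ (∑ i ∈ Finset.range m, Y j i * ndigit p (k j) i) := by
    intro j
    rw [wal, hxj j]
    congr 1
    have h1 : ∑ i ∈ Finset.range (k j + 1),
          xdigit p (∑ l ∈ Finset.range m, (Y j l : ℝ) / (p : ℝ) ^ (l + 1)) (i + 1) * ndigit p (k j) i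
        = ∑ i ∈ Finset.range (max (k j + 1) m),
          xdigit p (∑ l ∈ Finset.range m, (Y j l : ℝ) / (p : ℝ) ^ (l + 1)) (i + 1) * ndigit p (k j) i := by
      refine Finset.sum_subset (Finset.range_subset_range.mpr (le_max_left _ _)) fun x _ hx => ?_
      rw [ndigit_eq_zero p (k j) x hp (by simpa using hx), mul_zero]
    rw [h1]
    have h2 : ∀ i ∈ Finset.range (max (k j + 1) m),
        xdigit p (∑ l ∈ Finset.range m, (Y j l : ℝ) / (p : ℝ) ^ (l + 1)) (i + 1) * ndigit p (k j) i
        = (if i < m then Y j i else 0) * ndigit p (k j) i := by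
      intro i _
      rw [xdigit_sum p hp m (Y j) (hYlt j) i]
    rw [Finset.sum_congr rfl h2]
    refine (Finset.sum_subset (Finset.range_subset_range.mpr (le_max_right _ _)) fun x _ hx => ?_).symm.trans ?_
    · rw [if_neg (by simpa using hx), zero_mul]
    · refine Finset.sum_congr rfl fun i hi => ?_
      rw [if_pos (Finset.mem_range.mp hi)]
  rw [walS, Finset.prod_congr rfl fun j _ => key j, Finset.prod_pow_eq_pow_sum]
  set E : ℕ := ∑ j, ∑ i ∈ Finset.range m, Y j i * ndigit p (k j) i with hE
  have hcast : ((E : ℕ) : ZMod p) = ∑ i, nvec p m n i * h i := by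
    rw [hE]
    push_cast
    have : ∀ j : Fin s, ∑ i ∈ Finset.range m, ((Y j i : ZMod p) * (ndigit p (k j) i : ZMod p))
        = ∑ i : Fin m, y j i * nvec p m (k j) i := by
      intro j
      rw [← Fin.sum_univ_eq_sum_range (fun i => (Y j i : ZMod p) * (ndigit p (k j) i : ZMod p)) m]
      refine Finset.sum_congr rfl fun i _ => ?_
      simp only [hY, i.isLt, dif_pos, Fin.eta, nvec, ZMod.natCast_val, ZMod.cast_id]
    rw [Finset.sum_congr rfl fun j _ => this j]
    have hhi : ∀ i, h i = ∑ j, (Matrix.transpose (C j)).mulVec (nvec p m (k j)) i := by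
      intro i
      rw [← hh, Cdot, Finset.sum_apply]
    simp only [hhi, hy, Matrix.mulVec, dotProduct, Matrix.transpose_apply,
      Finset.mul_sum, Finset.sum_mul]
    conv_rhs => rw [Finset.sum_comm]
    refine Finset.sum_congr rfl fun j _ => ?_
    conv_rhs => rw [Finset.sum_comm]
    refine Finset.sum_congr rfl fun i _ => Finset.sum_congr rfl fun l _ => ?_
    ring
  have hval : (∑ i, nvec p m n i * h i).val = E % p := by
    rw [← hcast, ZMod.val_natCast]
  rw [hval, ← omega_pow_mod p (by omega)]
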